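/- For λ > 0 and l ∈ ℕ₀, ∫_{-1}^1 t · C_l^λ(t) · C_{l+1}^λ(t) · (1-t²)^{λ-1/2} dt = π·Γ(l+2λ+1) / (2^{2λ} · l! · (l+λ) · (l+λ+1) · Γ(λ)²). -/

import Mathlib

open Real

/-- The Gegenbauer polynomial `C_l^λ(t)`, via its standard explicit formula
(equivalent to the generating-function definition
`∑ C_l^λ(t) r^l = (1 - 2tr + r²)^(-λ)`). -/
noncomputable def gegenbauer (lam : ℝ) (l : ℕ) (t : ℝ) : ℝ :=
  ∑ k ∈ Finset.range (l / 2 + 1),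
    (-1 : ℝ) ^ k * Real.Gamma (lam + l - k) /
      (Real.Gamma lam * (Nat.factorial k) * (Nat.factorial (l - 2 * k))) *
      (2 * t) ^ (l - 2 * k)

open MeasureTheory Set

/-- padded coefficient -/
noncomputable def gcoef (lam : ℝ) (n k : ℕ) : ℝ :=
  if 2 * k ≤ n then
    (-1 : ℝ) ^ k * Real.Gamma (lam + n - k) /
      (Real.Gamma lam * (Nat.factorial k) * (Nat.factorial (n - 2 * k)))
  else 0

lemma gegenbauer_eq_sum (lam : ℝ) (n : ℕ) {M : ℕ} (hM : n / 2 + 1 ≤ M) (t : ℝ) :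
    gegenbauer lam n t = ∑ k ∈ Finset.range M, gcoef lam n k * (2 * t) ^ (n - 2 * k) := by
  rw [gegenbauer]
  rw [← Finset.sum_subset (Finset.range_subset_range.2 hM)]
  · apply Finset.sum_congr rfl
    intro k hk
    rw [Finset.mem_range] at hk
    rw [gcoef, if_pos (by omega)]
  · intro k _ hk
    rw [Finset.mem_range, not_lt] at hk
    rw [gcoef, if_neg (by omega), zero_mul]

/-- derivative of the Gegenbauer polynomial as an explicit sum -/
noncomputable def gder (lam : ℝ) (n : ℕ) (t : ℝ) : ℝ :=
  ∑ k ∈ Finset.range (n / 2 + 1),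
    gcoef lam n k * (2 * ((n - 2 * k : ℕ) : ℝ)) * (2 * t) ^ (n - 2 * k - 1)

lemma gder_eq_sum (lam : ℝ) (n : ℕ) {M : ℕ} (hM : n / 2 + 1 ≤ M) (t : ℝ) :
    gder lam n t
      = ∑ k ∈ Finset.range M, gcoef lam n k * (2 * ((n - 2 * k : ℕ) : ℝ)) * (2 * t) ^ (n - 2 * k - 1) := by
  rw [gder, ← Finset.sum_subset (Finset.range_subset_range.2 hM)]
  intro k _ hk
  rw [Finset.mem_range, not_lt] at hk
  rw [gcoef, if_neg (by omega)]
  ring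

lemma hasDerivAt_gegenbauer (lam : ℝ) (n : ℕ) (t : ℝ) :
    HasDerivAt (gegenbauer lam n) (gder lam n t) t := by
  have h : ∀ x : ℝ, gegenbauer lam n x
      = ∑ k ∈ Finset.range (n / 2 + 1), gcoef lam n k * (2 * x) ^ (n - 2 * k) :=
    fun x => gegenbauer_eq_sum lam n le_rfl x
  rw [funext h]
  rw [gder]
  apply HasDerivAt.fun_sum
  intro k _
  have h2 : HasDerivAt (fun x : ℝ => 2 * x) 2 t := by
    simpa using (hasDerivAt_id t).const_mul (2 : ℝ)
  have h3 : HasDerivAt (fun x : ℝ => (2 * x) ^ (n - 2 * k))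
      (((n - 2 * k : ℕ) : ℝ) * (2 * t) ^ (n - 2 * k - 1) * 2) t :=
    (hasDerivAt_pow (n - 2 * k) (2 * t)).comp t h2
  have := h3.const_mul (gcoef lam n k)
  refine this.congr_deriv ?_
  ring

lemma continuous_gegenbauer (lam : ℝ) (n : ℕ) : Continuous (gegenbauer lam n) := by
  have : (gegenbauer lam n) = fun t => ∑ k ∈ Finset.range (n / 2 + 1),
      gcoef lam n k * (2 * t) ^ (n - 2 * k) := funext (gegenbauer_eq_sum lam n le_rfl)
  rw [this]
  continuity

lemma star (lam : ℝ) (hlam : 0 < lam) (n : ℕ) (hn : 1 ≤ n) (t : ℝ) :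
    (1 - t ^ 2) * gder (lam + 1) (n - 1) t
      - (2 * lam + 1) * t * gegenbauer (lam + 1) (n - 1) t
      + ((n : ℝ) * ((n : ℝ) + 2 * lam) / (2 * lam)) * gegenbauer lam n t = 0 := by
  have hG : Real.Gamma lam ≠ 0 := (Real.Gamma_pos_of_pos hlam).ne'
  have hG1 : Real.Gamma (lam + 1) = lam * Real.Gamma lam := Real.Gamma_add_one hlam.ne'
  set M := n / 2 + 1 with hMdef
  have hM1 : (n - 1) / 2 + 1 ≤ M := by omega
  rw [gegenbauer_eq_sum (lam + 1) (n - 1) hM1 t, gegenbauer_eq_sum lam n le_rfl t,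
    gder_eq_sum (lam + 1) (n - 1) hM1 t]
  set B : ℕ → ℝ := fun k => gcoef (lam + 1) (n - 1) k with hB
  set h : ℕ → ℝ := fun j =>
    (if j = 0 then 0 else B (j - 1) * (2 * ((n - 1 - 2 * (j - 1) : ℕ) : ℝ))) * (2 * t) ^ (n - 2 * j)
    with hh
  have hterm : ∀ k, h (k + 1)
      = B k * (2 * ((n - 1 - 2 * k : ℕ) : ℝ)) * (2 * t) ^ (n - 1 - 2 * k - 1) := by
    intro k
    simp only [hh, if_neg (Nat.succ_ne_zero k), Nat.add_sub_cancel]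
    rw [show n - 2 * (k + 1) = n - 1 - 2 * k - 1 by omega, mul_assoc]
  have h0 : h 0 = 0 := by simp [hh]
  have hMz : h M = 0 := by
    simp only [hh, if_neg (by omega : M ≠ 0)]
    rcases Nat.even_or_odd n with he | ho
    · obtain ⟨m, rfl⟩ := he
      have : B (M - 1) = 0 := by
        rw [hB]; simp only []; rw [gcoef, if_neg (by omega)]
      rw [this]; ring
    · obtain ⟨m, rfl⟩ := ho
      rw [show 2 * m + 1 - 1 - 2 * (M - 1) = 0 by omega]
      norm_num
  have hD : (∑ k ∈ Finset.range M,
        B k * (2 * ((n - 1 - 2 * k : ℕ) : ℝ)) * (2 * t) ^ (n - 1 - 2 * k - 1))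
      = ∑ j ∈ Finset.range M, h j := by
    calc (∑ k ∈ Finset.range M,
          B k * (2 * ((n - 1 - 2 * k : ℕ) : ℝ)) * (2 * t) ^ (n - 1 - 2 * k - 1))
        = ∑ k ∈ Finset.range M, h (k + 1) := Finset.sum_congr rfl fun k _ => (hterm k).symm
      _ = ∑ j ∈ Finset.range (M + 1), h j - h 0 := by rw [Finset.sum_range_succ' h M]; ring
      _ = ∑ j ∈ Finset.range M, h j := by rw [Finset.sum_range_succ, h0, hMz]; ring
  have e1 : (1 - t ^ 2) * (∑ k ∈ Finset.range M,
        B k * (2 * ((n - 1 - 2 * k : ℕ) : ℝ)) * (2 * t) ^ (n - 1 - 2 * k - 1))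
      = (∑ j ∈ Finset.range M, h j) - t ^ 2 * (∑ k ∈ Finset.range M,
        B k * (2 * ((n - 1 - 2 * k : ℕ) : ℝ)) * (2 * t) ^ (n - 1 - 2 * k - 1)) := by
    rw [← hD]; ring
  rw [e1, Finset.mul_sum, Finset.mul_sum, Finset.mul_sum, ← Finset.sum_sub_distrib,
    ← Finset.sum_sub_distrib, ← Finset.sum_add_distrib]
  apply Finset.sum_eq_zero
  intro k hk
  rw [Finset.mem_range] at hk
  have hkn : 2 * k ≤ n := by omega
  -- Goal: h k - t^2*(B k * (2*↑(n-1-2k)) * (2t)^(n-1-2k-1))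
  --        - (2λ+1)*t*(B k * (2t)^(n-1-2k)) + c*(gcoef lam n k * (2t)^(n-2k)) = 0
  have hfac0 : ∀ m : ℕ, ((m.factorial : ℝ)) ≠ 0 := fun m => Nat.cast_ne_zero.2 m.factorial_ne_zero
  rcases Nat.eq_zero_or_pos k with rfl | hk1
  · -- k = 0
    simp only [hh, eq_self_iff_true, if_true, zero_mul, Nat.mul_zero, Nat.sub_zero]
    rcases eq_or_lt_of_le hn with h1 | h2
    · -- n = 1
      obtain rfl : n = 1 := h1.symm
      simp only [hB, gcoef]
      norm_num
      rw [hG1]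
      field_simp
      ring
    · -- n ≥ 2
      obtain ⟨e, he⟩ : ∃ e, n = e + 2 := ⟨n - 2, by omega⟩
      subst he
      simp only [hB, gcoef, if_pos (by omega : 2 * 0 ≤ e + 2 - 1), if_pos (by omega : 2*0 ≤ e + 2)]
      rw [show e + 2 - 1 - 1 = e by omega, show e + 2 - 1 = e + 1 by omega,
        show e + 2 - 2 * 0 = e + 2 by omega]
      rw [show lam + 1 + ((e + 1 : ℕ) : ℝ) - ((0:ℕ):ℝ) = lam + ((e:ℝ)+2) by push_cast; ring,
        show lam + ((e+2 : ℕ):ℝ) - ((0:ℕ):ℝ) = lam + ((e:ℝ)+2) by push_cast; ring]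
      push_cast [Nat.factorial_succ, hG1]
      field_simp
      ring
  · -- k ≥ 1
    obtain ⟨j, rfl⟩ : ∃ j, k = j + 1 := ⟨k - 1, by omega⟩
    simp only [hh, if_neg (Nat.succ_ne_zero j), Nat.add_sub_cancel]
    have hx : (0:ℝ) < lam + n - (j+1 : ℕ) := by
      have : ((j+1 : ℕ):ℝ) ≤ (n:ℝ) := Nat.cast_le.2 (by omega)
      push_cast at this ⊢; linarith
    rcases Nat.lt_or_ge (2*(j+1)) n with hlt | hge
    · -- 2k ≤ n-1
      rcases Nat.lt_or_ge (2*(j+1)+1) n with hlt2 | hge2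
      · -- n - 2k ≥ 2
        obtain ⟨e, he⟩ : ∃ e, n = 2*j + e + 4 := ⟨n - 2*j - 4, by omega⟩
        simp only [hB, gcoef, if_pos (by omega : 2*j ≤ n - 1), if_pos (by omega : 2*(j+1) ≤ n - 1),
          if_pos (by omega : 2*(j+1) ≤ n)]
        rw [show n - 1 - 2*(j+1) - 1 = e by omega, show n - 1 - 2*(j+1) = e+1 by omega,
          show n - 2*(j+1) = e+2 by omega, show n - 1 - 2*j = e+3 by omega]
        rw [show lam + 1 + ((n - 1 : ℕ) : ℝ) - (j:ℕ) = lam + (n:ℝ) - ((j+1:ℕ):ℝ) + 1 by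
            push_cast [Nat.cast_sub hn]; ring,
          show lam + 1 + ((n - 1 : ℕ) : ℝ) - ((j+1:ℕ):ℝ) = lam + (n:ℝ) - ((j+1:ℕ):ℝ) by
            push_cast [Nat.cast_sub hn]; ring]
        rw [Real.Gamma_add_one hx.ne']
        have hncast : (n:ℝ) = 2*(j:ℝ) + (e:ℝ) + 4 := by exact_mod_cast congrArg (Nat.cast : ℕ → ℝ) he
        rw [hncast]
        push_cast [Nat.factorial_succ, hG1, pow_succ]
        field_simp
        ring
      · -- n - 2k = 1
        have hone : n = 2*(j+1) + 1 := by omega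
        simp only [hB, gcoef, if_pos (by omega : 2*j ≤ n - 1), if_pos (by omega : 2*(j+1) ≤ n - 1),
          if_pos (by omega : 2*(j+1) ≤ n)]
        rw [show n - 1 - 2*(j+1) = 0 by omega, show n - 2*(j+1) = 1 by omega,
          show n - 1 - 2*j = 2 by omega]
        rw [show lam + 1 + ((n - 1 : ℕ) : ℝ) - (j:ℕ) = lam + (n:ℝ) - ((j+1:ℕ):ℝ) + 1 by
            push_cast [Nat.cast_sub hn]; ring,
          show lam + 1 + ((n - 1 : ℕ) : ℝ) - ((j+1:ℕ):ℝ) = lam + (n:ℝ) - ((j+1:ℕ):ℝ) by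
            push_cast [Nat.cast_sub hn]; ring]
        rw [Real.Gamma_add_one hx.ne']
        have hncast : (n:ℝ) = 2*(j:ℝ) + 3 := by exact_mod_cast congrArg (Nat.cast : ℕ → ℝ) hone
        rw [hncast]
        push_cast [Nat.factorial_succ, hG1]
        field_simp
        ring
    · -- 2k = n
      have heq : n = 2*(j+1) := by omega
      simp only [hB, gcoef, if_pos (by omega : 2*j ≤ n - 1), if_neg (by omega : ¬ 2*(j+1) ≤ n - 1),
        if_pos (by omega : 2*(j+1) ≤ n)]
      rw [show n - 1 - 2*(j+1) = 0 by omega, show n - 2*(j+1) = 0 by omega,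
        show n - 1 - 2*j = 1 by omega]
      rw [show lam + 1 + ((n - 1 : ℕ) : ℝ) - (j:ℕ) = lam + (n:ℝ) - ((j+1:ℕ):ℝ) + 1 by
          push_cast [Nat.cast_sub hn]; ring]
      rw [Real.Gamma_add_one hx.ne']
      have hncast : (n:ℝ) = 2*(j:ℝ) + 2 := by exact_mod_cast congrArg (Nat.cast : ℕ → ℝ) heq
      rw [hncast]
      push_cast [Nat.factorial_succ, hG1]
      field_simp
      ring

lemma rpow_one_sub_sq_integrable {ν : ℝ} (hν : -1 < ν) :
    IntegrableOn (fun t : ℝ => (1 - t ^ 2) ^ ν) (Ioc (-1 : ℝ) 1) := by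
  have hmeas : AEStronglyMeasurable (fun t : ℝ => (1 - t ^ 2) ^ ν)
      (volume.restrict (Ioc (0:ℝ) 1)) := by
    apply Measurable.aestronglyMeasurable; measurability
  have hmeas2 : AEStronglyMeasurable (fun t : ℝ => (1 - t ^ 2) ^ ν)
      (volume.restrict (Ioc (-1:ℝ) 0)) := by
    apply Measurable.aestronglyMeasurable; measurability
  set C : ℝ := max 1 ((2:ℝ) ^ ν) with hCdef
  have hC : (0:ℝ) ≤ C := le_trans zero_le_one (le_max_left _ _)
  have hfac : ∀ s : ℝ, 1 ≤ s → s ≤ 2 → s ^ ν ≤ C := by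
    intro s h1 h2
    rcases le_or_gt 0 ν with hν0 | hν0
    · exact le_max_of_le_right (Real.rpow_le_rpow (by linarith) h2 hν0)
    · exact le_max_of_le_left (Real.rpow_le_one_of_one_le_of_nonpos h1 hν0.le)
  have hright : IntegrableOn (fun t : ℝ => (1 - t ^ 2) ^ ν) (Ioc (0:ℝ) 1) := by
    have hg : IntervalIntegrable (fun x : ℝ => C * (1 - x) ^ ν) volume 0 1 := by
      have h0 : IntervalIntegrable (fun x : ℝ => x ^ ν) volume 0 1 :=
        intervalIntegral.intervalIntegrable_rpow' hν
      have h1 := (h0.comp_sub_left 1).symm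
      norm_num at h1
      exact h1.const_mul C
    have hgi : IntegrableOn (fun x : ℝ => C * (1 - x) ^ ν) (Ioc (0:ℝ) 1) :=
      (intervalIntegrable_iff_integrableOn_Ioc_of_le (by norm_num)).1 hg
    apply hgi.mono' hmeas
    filter_upwards [ae_restrict_mem measurableSet_Ioc] with x hx
    have hx1 : 0 < x := hx.1
    have hx2 : x ≤ 1 := hx.2
    have h1x : 0 ≤ 1 - x := by linarith
    have heq : (1 - x ^ 2) ^ ν = (1 - x) ^ ν * (1 + x) ^ ν := by
      rw [← Real.mul_rpow h1x (by linarith)]; ring_nf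
    rw [Real.norm_of_nonneg (Real.rpow_nonneg (by nlinarith) ν), heq]
    calc (1 - x) ^ ν * (1 + x) ^ ν ≤ (1 - x) ^ ν * C := by
          apply mul_le_mul_of_nonneg_left (hfac _ (by linarith) (by linarith))
            (Real.rpow_nonneg h1x ν)
      _ = C * (1 - x) ^ ν := mul_comm _ _
  have hleft : IntegrableOn (fun t : ℝ => (1 - t ^ 2) ^ ν) (Ioc (-1:ℝ) 0) := by
    have hg : IntervalIntegrable (fun x : ℝ => C * (1 + x) ^ ν) volume (-1) 0 := by
      have h0 : IntervalIntegrable (fun x : ℝ => x ^ ν) volume 0 1 :=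
        intervalIntegral.intervalIntegrable_rpow' hν
      have h1 := h0.comp_add_right 1
      norm_num at h1
      have h2 : IntervalIntegrable (fun x : ℝ => (x + 1) ^ ν) volume (-1) 0 := h1
      have h3 : IntervalIntegrable (fun x : ℝ => (1 + x) ^ ν) volume (-1) 0 := by
        simpa [add_comm] using h2
      exact h3.const_mul C
    have hgi : IntegrableOn (fun x : ℝ => C * (1 + x) ^ ν) (Ioc (-1:ℝ) 0) :=
      (intervalIntegrable_iff_integrableOn_Ioc_of_le (by norm_num)).1 hg
    apply hgi.mono' hmeas2
    filter_upwards [ae_restrict_mem measurableSet_Ioc] with x hx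
    have hx1 : -1 < x := hx.1
    have hx2 : x ≤ 0 := hx.2
    have h1x : 0 ≤ 1 + x := by linarith
    have heq : (1 - x ^ 2) ^ ν = (1 + x) ^ ν * (1 - x) ^ ν := by
      rw [← Real.mul_rpow h1x (by linarith)]; ring_nf
    rw [Real.norm_of_nonneg (Real.rpow_nonneg (by nlinarith) ν), heq]
    calc (1 + x) ^ ν * (1 - x) ^ ν ≤ (1 + x) ^ ν * C := by
          apply mul_le_mul_of_nonneg_left (hfac _ (by linarith) (by linarith))
            (Real.rpow_nonneg h1x ν)
      _ = C * (1 + x) ^ ν := mul_comm _ _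
  have := hleft.union hright
  rwa [Set.Ioc_union_Ioc_eq_Ioc (by norm_num : (-1:ℝ) ≤ 0) (by norm_num : (0:ℝ) ≤ 1)] at this

lemma aux_int {ν : ℝ} (hν : -1 < ν) (f : ℝ → ℝ) (hf : Continuous f) :
    IntervalIntegrable (fun t => f t * (1 - t ^ 2) ^ ν) volume (-1) 1 := by
  rw [intervalIntegrable_iff_integrableOn_Ioc_of_le (by norm_num)]
  obtain ⟨Cf, hCf⟩ := isCompact_Icc.exists_bound_of_continuousOn
    (hf.continuousOn : ContinuousOn f (Icc (-1:ℝ) 1))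
  apply (rpow_one_sub_sq_integrable hν).bdd_mul (hf.measurable.aestronglyMeasurable)
  filter_upwards [ae_restrict_mem measurableSet_Ioc] with x hx
  exact hCf x ⟨hx.1.le, hx.2⟩

/-- the moment integral -/
noncomputable def gegI (lam : ℝ) (n m : ℕ) : ℝ :=
  ∫ t in (-1:ℝ)..1, t ^ m * gegenbauer lam n t * (1 - t ^ 2) ^ (lam - 1/2 : ℝ)

lemma weight_continuous {p : ℝ} (hp : 0 < p) :
    Continuous (fun t : ℝ => (1 - t ^ 2) ^ p) := by
  rw [continuous_iff_continuousAt]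
  intro x
  exact ContinuousAt.rpow_const (by fun_prop) (Or.inr hp.le)

lemma step (lam : ℝ) (hlam : 0 < lam) (n : ℕ) (hn : 1 ≤ n) (m : ℕ) :
    ((n : ℝ) * ((n : ℝ) + 2 * lam) / (2 * lam)) * gegI lam n m
      = (m : ℝ) * gegI (lam + 1) (n - 1) (m - 1) := by
  set c : ℝ := (n : ℝ) * ((n : ℝ) + 2 * lam) / (2 * lam) with hc
  set G : ℝ → ℝ := fun t => t ^ m * (1 - t ^ 2) ^ (lam + 1/2 : ℝ) * gegenbauer (lam + 1) (n - 1) t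
    with hG
  set φ1 : ℝ → ℝ := fun t =>
    (m : ℝ) * t ^ (m - 1) * (1 - t ^ 2) ^ (lam + 1/2 : ℝ) * gegenbauer (lam + 1) (n - 1) t with hφ1
  set φ2 : ℝ → ℝ := fun t =>
    c * (t ^ m * gegenbauer lam n t * (1 - t ^ 2) ^ (lam - 1/2 : ℝ)) with hφ2
  have hφ1int : IntervalIntegrable φ1 volume (-1) 1 := by
    apply Continuous.intervalIntegrable
    exact ((continuous_const.mul (continuous_pow _)).mul
      (weight_continuous (by linarith))).mul (continuous_gegenbauer _ _)
  have hφ2int : IntervalIntegrable φ2 volume (-1) 1 := by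
    have h := aux_int (ν := lam - 1/2) (by linarith)
      (fun t => c * (t ^ m * gegenbauer lam n t)) (by
        exact continuous_const.mul ((continuous_pow m).mul (continuous_gegenbauer lam n)))
    have heq : (fun t : ℝ => (c * (t ^ m * gegenbauer lam n t)) * (1 - t ^ 2) ^ (lam - 1/2 : ℝ))
        = φ2 := by funext t; rw [hφ2]; ring
    rwa [heq] at h
  have hcont : ContinuousOn G (Icc (-1:ℝ) 1) := by
    apply Continuous.continuousOn
    exact ((continuous_pow m).mul (weight_continuous (by linarith))).mul
      (continuous_gegenbauer _ _)
  have hderiv : ∀ x ∈ Ioo (-1:ℝ) 1, HasDerivAt G (φ1 x - φ2 x) x := by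
    intro x hx
    have h1 : 0 < 1 - x ^ 2 := by nlinarith [hx.1, hx.2]
    have hP := hasDerivAt_gegenbauer (lam + 1) (n - 1) x
    have hpow : HasDerivAt (fun t : ℝ => t ^ m) ((m:ℝ) * x ^ (m - 1)) x := hasDerivAt_pow m x
    have hin : HasDerivAt (fun t : ℝ => 1 - t ^ 2) (-(2 * x)) x := by
      simpa using ((hasDerivAt_pow 2 x).const_sub 1)
    have hw : HasDerivAt (fun t : ℝ => (1 - t ^ 2) ^ (lam + 1/2 : ℝ))
        ((lam + 1/2) * (1 - x ^ 2) ^ (lam + 1/2 - 1 : ℝ) * -(2 * x)) x :=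
      by
        have h := (Real.hasDerivAt_rpow_const (x := 1 - x ^ 2) (p := lam + 1/2) (Or.inl h1.ne')).comp x hin
        exact h
    have hGd := (hpow.fun_mul hw).fun_mul hP
    have hval : ((m:ℝ) * x ^ (m - 1) * (1 - x ^ 2) ^ (lam + 1/2 : ℝ)
          + x ^ m * ((lam + 1/2) * (1 - x ^ 2) ^ (lam + 1/2 - 1 : ℝ) * -(2 * x)))
          * gegenbauer (lam + 1) (n - 1) x
        + x ^ m * (1 - x ^ 2) ^ (lam + 1/2 : ℝ) * gder (lam + 1) (n - 1) x
        = φ1 x - φ2 x := by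
      have hs1 : (1 - x ^ 2) ^ (lam + 1/2 : ℝ) = (1 - x ^ 2) ^ (lam - 1/2 : ℝ) * (1 - x ^ 2) := by
        rw [show (lam + 1/2 : ℝ) = (lam - 1/2) + 1 by ring, Real.rpow_add h1, Real.rpow_one]
      have hs2 : (1 - x ^ 2) ^ (lam + 1/2 - 1 : ℝ) = (1 - x ^ 2) ^ (lam - 1/2 : ℝ) := by
        rw [show (lam + 1/2 - 1 : ℝ) = lam - 1/2 by ring]
      have hstar := star lam hlam n hn x
      simp only [hφ1, hφ2]
      rw [hs1, hs2]
      linear_combination (x ^ m * (1 - x ^ 2) ^ (lam - 1/2 : ℝ)) * hstar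
    rw [hval] at hGd
    exact hGd
  have hFTC := intervalIntegral.integral_eq_sub_of_hasDerivAt_of_le (by norm_num)
    hcont hderiv (hφ1int.sub hφ2int)
  have hG1 : G 1 = 0 := by
    show (1:ℝ) ^ m * ((1:ℝ) - 1 ^ 2) ^ (lam + 1/2 : ℝ) * gegenbauer (lam + 1) (n - 1) 1 = 0
    rw [show (1:ℝ) - 1 ^ 2 = 0 by norm_num, Real.zero_rpow (by positivity : (lam + 1/2 : ℝ) ≠ 0)]
    ring
  have hGm1 : G (-1) = 0 := by
    show (-1:ℝ) ^ m * ((1:ℝ) - (-1) ^ 2) ^ (lam + 1/2 : ℝ) * gegenbauer (lam + 1) (n - 1) (-1) = 0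
    rw [show (1:ℝ) - (-1) ^ 2 = 0 by norm_num,
      Real.zero_rpow (by positivity : (lam + 1/2 : ℝ) ≠ 0)]
    ring
  rw [intervalIntegral.integral_sub hφ1int hφ2int, hG1, hGm1] at hFTC
  have hsub : ∫ t in (-1:ℝ)..1, φ2 t = ∫ t in (-1:ℝ)..1, φ1 t := by linarith
  have h2 : ∫ t in (-1:ℝ)..1, φ2 t = c * gegI lam n m := by
    rw [hφ2, gegI, intervalIntegral.integral_const_mul]
  have h1 : ∫ t in (-1:ℝ)..1, φ1 t = (m:ℝ) * gegI (lam + 1) (n - 1) (m - 1) := by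
    rw [hφ1, gegI]
    rw [show ((lam + 1 : ℝ) - 1/2) = lam + 1/2 by ring]
    rw [← intervalIntegral.integral_const_mul]
    apply intervalIntegral.integral_congr
    intro t _
    ring
  rw [← h2, ← h1, hsub]


lemma vanish : ∀ m : ℕ, ∀ lam : ℝ, 0 < lam → ∀ n : ℕ, m < n → gegI lam n m = 0 := by
  intro m
  induction m with
  | zero =>
    intro lam hlam n hmn
    have hs := step lam hlam n (by omega) 0
    have hn0 : (0:ℝ) < (n:ℝ) := by exact_mod_cast hmn
    have hc : (0:ℝ) < (n : ℝ) * ((n : ℝ) + 2 * lam) / (2 * lam) :=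
      div_pos (mul_pos hn0 (by linarith)) (by linarith)
    rw [Nat.cast_zero, zero_mul] at hs
    exact (mul_eq_zero.1 hs).resolve_left hc.ne'
  | succ m ih =>
    intro lam hlam n hmn
    have hs := step lam hlam n (by omega) (m + 1)
    have hn0 : (0:ℝ) < (n:ℝ) := by exact_mod_cast (by omega : 0 < n)
    have hc : (0:ℝ) < (n : ℝ) * ((n : ℝ) + 2 * lam) / (2 * lam) :=
      div_pos (mul_pos hn0 (by linarith)) (by linarith)
    rw [Nat.add_sub_cancel] at hs
    rw [ih (lam + 1) (by linarith) (n - 1) (by omega), mul_zero] at hs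
    exact (mul_eq_zero.1 hs).resolve_left hc.ne'

lemma real_beta {a b : ℝ} (ha : 0 < a) (hb : 0 < b) :
    ∫ x in (0:ℝ)..1, x ^ (a - 1 : ℝ) * (1 - x) ^ (b - 1 : ℝ)
      = Real.Gamma a * Real.Gamma b / Real.Gamma (a + b) := by
  have h := Complex.Gamma_mul_Gamma_eq_betaIntegral (s := (a:ℂ)) (t := (b:ℂ))
    (by simpa using ha) (by simpa using hb)
  have hbeta : Complex.betaIntegral (a:ℂ) (b:ℂ)
      = ((∫ x in (0:ℝ)..1, x ^ (a - 1 : ℝ) * (1 - x) ^ (b - 1 : ℝ) : ℝ) : ℂ) := by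
    rw [Complex.betaIntegral, ← intervalIntegral.integral_ofReal]
    apply intervalIntegral.integral_congr
    intro x hx
    rw [Set.uIcc_of_le (by norm_num : (0:ℝ) ≤ 1)] at hx
    simp only []
    rw [show ((a:ℂ) - 1) = ((a - 1 : ℝ) : ℂ) by push_cast; ring,
      show ((b:ℂ) - 1) = ((b - 1 : ℝ) : ℂ) by push_cast; ring,
      show ((1:ℂ) - (x:ℂ)) = ((1 - x : ℝ) : ℂ) by push_cast; ring,
      ← Complex.ofReal_cpow hx.1, ← Complex.ofReal_cpow (by linarith [hx.2] : (0:ℝ) ≤ 1 - x),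
      ← Complex.ofReal_mul]
  rw [hbeta, ← Complex.ofReal_add, Complex.Gamma_ofReal, Complex.Gamma_ofReal,
    Complex.Gamma_ofReal] at h
  have hG : Real.Gamma (a + b) ≠ 0 := (Real.Gamma_pos_of_pos (by linarith)).ne'
  have h' : Real.Gamma a * Real.Gamma b
      = Real.Gamma (a + b) * ∫ x in (0:ℝ)..1, x ^ (a - 1 : ℝ) * (1 - x) ^ (b - 1 : ℝ) := by
    exact_mod_cast h
  rw [h']
  field_simp

lemma base_integral (lam : ℝ) (hlam : 0 < lam) :
    ∫ t in (-1:ℝ)..1, (1 - t ^ 2) ^ (lam - 1/2 : ℝ)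
      = √π * Real.Gamma (lam + 1/2) / Real.Gamma (lam + 1) := by
  have h1 : ∫ t in (-1:ℝ)..1, (1 - t ^ 2) ^ (lam - 1/2 : ℝ)
      = 2 * ∫ x in (0:ℝ)..1, ((1 : ℝ) - (2 * x + -1) ^ 2) ^ (lam - 1/2 : ℝ) := by
    have h := intervalIntegral.integral_comp_mul_add
      (a := (0:ℝ)) (b := 1) (fun t => (1 - t ^ 2) ^ (lam - 1/2 : ℝ)) two_ne_zero (-1)
    norm_num at h
    linarith [h]
  have h2 : ∫ x in (0:ℝ)..1, ((1 : ℝ) - (2 * x + -1) ^ 2) ^ (lam - 1/2 : ℝ)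
      = (4:ℝ) ^ (lam - 1/2 : ℝ) *
        ∫ x in (0:ℝ)..1, x ^ (lam + 1/2 - 1 : ℝ) * (1 - x) ^ (lam + 1/2 - 1 : ℝ) := by
    rw [← intervalIntegral.integral_const_mul]
    apply intervalIntegral.integral_congr
    intro x hx
    rw [Set.uIcc_of_le (by norm_num : (0:ℝ) ≤ 1)] at hx
    have hx0 : 0 ≤ x := hx.1
    have hx1 : 0 ≤ 1 - x := by linarith [hx.2]
    simp only []
    rw [show (1 : ℝ) - (2 * x + -1) ^ 2 = (4 * x) * (1 - x) by ring,
      Real.mul_rpow (by linarith) hx1, Real.mul_rpow (by norm_num) hx0,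
      show (lam + 1/2 - 1 : ℝ) = lam - 1/2 by ring]
    ring
  have h3 := real_beta (a := lam + 1/2) (b := lam + 1/2) (by linarith) (by linarith)
  have hdup := Real.Gamma_mul_Gamma_add_half lam
  rw [h1, h2, h3]
  have hGpos : 0 < Real.Gamma lam := Real.Gamma_pos_of_pos hlam
  have hG12 : 0 < Real.Gamma (lam + 1/2) := Real.Gamma_pos_of_pos (by linarith)
  have hG2 : 0 < Real.Gamma (2 * lam) := Real.Gamma_pos_of_pos (by linarith)
  rw [show (lam + 1/2 + (lam + 1/2) : ℝ) = 2 * lam + 1 by ring,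
    Real.Gamma_add_one (by positivity : (2 * lam : ℝ) ≠ 0),
    Real.Gamma_add_one hlam.ne']
  have h4 : (4:ℝ) ^ (lam - 1/2 : ℝ) = (2:ℝ) ^ (2 * lam - 1 : ℝ) := by
    rw [show (2 * lam - 1 : ℝ) = 2 * (lam - 1/2) by ring,
      Real.rpow_mul (by norm_num : (0:ℝ) ≤ 2)]
    congr 1
    rw [show ((2:ℝ) ^ (2:ℝ)) = (2:ℝ) ^ ((2:ℕ):ℝ) by norm_num, Real.rpow_natCast]
    norm_num
  rw [h4]
  have h5 : (2:ℝ) ^ (2 * lam - 1 : ℝ) * (2:ℝ) ^ (1 - 2 * lam : ℝ) = 1 := by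
    rw [← Real.rpow_add two_pos]; norm_num
  have hsqrtpi : (0:ℝ) < √π := Real.sqrt_pos.2 Real.pi_pos
  have hp2 : (0:ℝ) < (2:ℝ) ^ (2 * lam - 1 : ℝ) := Real.rpow_pos_of_pos two_pos _
  set A := Real.Gamma (lam + 1/2) with hA
  set B := Real.Gamma lam with hBB
  set C := Real.Gamma (2 * lam) with hCC
  set D := (2:ℝ) ^ (2 * lam - 1 : ℝ) with hD
  set E := (2:ℝ) ^ (1 - 2 * lam : ℝ) with hE
  set S := √π with hS
  have hBne : B ≠ 0 := hGpos.ne'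
  have hCne : C ≠ 0 := hG2.ne'
  have hlamne : lam ≠ 0 := hlam.ne'
  field_simp
  linear_combination D * hdup + C * S * h5

lemma gegenbauer_zero (lam : ℝ) (hlam : 0 < lam) (t : ℝ) : gegenbauer lam 0 t = 1 := by
  rw [gegenbauer]
  rw [Finset.sum_range_one]
  simp only [Nat.cast_zero, pow_zero, Nat.factorial_zero, Nat.cast_one, mul_one, Nat.zero_sub,
    Nat.mul_zero, Nat.sub_zero, sub_zero, one_mul, add_zero]
  rw [div_self (Real.Gamma_pos_of_pos hlam).ne']

lemma diag : ∀ n : ℕ, ∀ lam : ℝ, 0 < lam →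
    gegI lam n n = √π * 2^n *
        (Real.Gamma (lam + n) * Real.Gamma (n + 2*lam) * Real.Gamma (lam + n + 1/2))
      / (Real.Gamma lam * Real.Gamma (2*n + 2*lam) * Real.Gamma (lam + n + 1)) := by
  intro n
  induction n with
  | zero =>
    intro lam hlam
    have hbase := base_integral lam hlam
    have h0 : gegI lam 0 0 = ∫ t in (-1:ℝ)..1, (1 - t^2)^(lam - 1/2 : ℝ) := by
      rw [gegI]
      apply intervalIntegral.integral_congr
      intro t _
      simp only []
      rw [gegenbauer_zero lam hlam]
      ring
    rw [h0, hbase]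
    have hg1 : Real.Gamma lam ≠ 0 := (Real.Gamma_pos_of_pos hlam).ne'
    have hg2 : Real.Gamma (lam + 1) ≠ 0 := (Real.Gamma_pos_of_pos (by linarith)).ne'
    have hg3 : Real.Gamma (2 * 0 + 2 * lam) ≠ 0 := by
      norm_num
      exact (Real.Gamma_pos_of_pos (by linarith)).ne'
    push_cast
    field_simp
    ring
  | succ n ih =>
    intro lam hlam
    have hs := step lam hlam (n+1) (by omega) (n+1)
    rw [Nat.add_sub_cancel] at hs
    rw [ih (lam+1) (by linarith)] at hs
    have hn1 : (0:ℝ) < (n:ℝ) + 1 := by positivity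
    have hcne : ((n+1:ℕ):ℝ) * (((n+1:ℕ):ℝ) + 2*lam) / (2*lam) ≠ 0 := by
      push_cast
      positivity
    apply mul_left_cancel₀ hcne
    rw [hs]
    have hx1 : (0:ℝ) < (n:ℝ) + 1 + 2*lam := by linarith
    have hg1 : Real.Gamma lam ≠ 0 := (Real.Gamma_pos_of_pos hlam).ne'
    have hg2 : Real.Gamma (2*((n:ℝ)+1)+2*lam) ≠ 0 :=
      (Real.Gamma_pos_of_pos (by linarith)).ne'
    have hg3 : Real.Gamma (lam+((n:ℝ)+1)+1) ≠ 0 :=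
      (Real.Gamma_pos_of_pos (by linarith)).ne'
    push_cast
    rw [show ((n:ℝ) + 2*(lam+1)) = ((n:ℝ)+1+2*lam)+1 by ring, Real.Gamma_add_one hx1.ne',
      Real.Gamma_add_one hlam.ne',
      show (2*(n:ℝ)+2*(lam+1)) = 2*((n:ℝ)+1)+2*lam by ring,
      show (lam+1+(n:ℝ)) = lam+((n:ℝ)+1) by ring]
    field_simp
    ring

theorem gegenbauer_weighted_t_integral (lam : ℝ) (hlam : 0 < lam) (l : ℕ) :
    ∫ t in (-1 : ℝ)..1,
        t * gegenbauer lam l t * gegenbauer lam (l + 1) t * (1 - t ^ 2) ^ (lam - 1 / 2 : ℝ) =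
      Real.pi * Real.Gamma ((l : ℝ) + 2 * lam + 1) /
        ((2 : ℝ) ^ (2 * lam : ℝ) * (Nat.factorial l) * ((l : ℝ) + lam) *
          ((l : ℝ) + lam + 1) * Real.Gamma lam ^ 2) := by
  classical
  have hw : (-1 : ℝ) < lam - 1/2 := by linarith
  have hptw : ∀ t : ℝ, t * gegenbauer lam l t * gegenbauer lam (l+1) t
        * (1 - t^2) ^ (lam - 1/2 : ℝ)
      = ∑ j ∈ Finset.range (l/2+1), gcoef lam l j * 2^(l-2*j) *
          (t^(l-2*j+1) * gegenbauer lam (l+1) t * (1 - t^2) ^ (lam - 1/2 : ℝ)) := by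
    intro t
    rw [gegenbauer_eq_sum lam l le_rfl t, Finset.mul_sum, Finset.sum_mul, Finset.sum_mul]
    apply Finset.sum_congr rfl
    intro j _
    rw [mul_pow, pow_succ]
    ring
  rw [intervalIntegral.integral_congr (g := fun t => ∑ j ∈ Finset.range (l/2+1),
      gcoef lam l j * 2^(l-2*j) *
        (t^(l-2*j+1) * gegenbauer lam (l+1) t * (1 - t^2) ^ (lam - 1/2 : ℝ)))
    (fun t _ => hptw t)]
  rw [intervalIntegral.integral_finset_sum (fun j _ => by
    have h := aux_int hw (fun t => gcoef lam l j * 2^(l-2*j) *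
      (t^(l-2*j+1) * gegenbauer lam (l+1) t))
      (continuous_const.mul ((continuous_pow _).mul (continuous_gegenbauer _ _)))
    have heq : (fun t : ℝ => (gcoef lam l j * 2^(l-2*j) *
        (t^(l-2*j+1) * gegenbauer lam (l+1) t)) * (1 - t^2) ^ (lam - 1/2 : ℝ))
        = fun t : ℝ => gcoef lam l j * 2^(l-2*j) *
          (t^(l-2*j+1) * gegenbauer lam (l+1) t * (1 - t^2) ^ (lam - 1/2 : ℝ)) := by
      funext t; ring
    rwa [heq] at h)]
  have hterm : ∀ j ∈ Finset.range (l/2+1),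
      (∫ t in (-1:ℝ)..1, gcoef lam l j * 2^(l-2*j) *
        (t^(l-2*j+1) * gegenbauer lam (l+1) t * (1 - t^2) ^ (lam - 1/2 : ℝ)))
      = gcoef lam l j * 2^(l-2*j) * gegI lam (l+1) (l-2*j+1) := by
    intro j _
    rw [intervalIntegral.integral_const_mul, gegI]
  rw [Finset.sum_congr rfl hterm]
  rw [Finset.sum_eq_single_of_mem 0 (Finset.mem_range.2 (by omega)) (fun j hj hj0 => by
    rw [vanish (l-2*j+1) lam hlam (l+1) (by rw [Finset.mem_range] at hj; omega), mul_zero])]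
  rw [show l - 2*0 + 1 = l + 1 by omega, Nat.mul_zero, Nat.sub_zero]
  rw [diag (l+1) lam hlam]
  rw [gcoef, if_pos (by omega : 2*0 ≤ l)]
  simp only [pow_zero, Nat.cast_zero, sub_zero, Nat.factorial_zero, Nat.cast_one, mul_one,
    one_mul, Nat.mul_zero, Nat.sub_zero]
  push_cast
  have hl0 : (0:ℝ) < lam + l := by positivity
  have hl1 : (0:ℝ) < lam + (l:ℝ) + 1 := by linarith
  rw [show (lam + ((l:ℝ)+1)) = lam + (l:ℝ) + 1 by ring,
    show ((l:ℝ)+1+2*lam) = (l:ℝ)+2*lam+1 by ring,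
    show (2*((l:ℝ)+1)+2*lam) = 2*(lam+(l:ℝ)+1) by ring]
  rw [Real.Gamma_add_one hl1.ne', Real.Gamma_add_one hl0.ne']
  have hdup := Real.Gamma_mul_Gamma_add_half (lam + (l:ℝ) + 1)
  rw [Real.Gamma_add_one hl0.ne'] at hdup
  have hpow : (2:ℝ)^(l:ℕ) * (2:ℝ)^(l+1:ℕ)
      * ((2:ℝ)^((1:ℝ)-2*(lam+(l:ℝ)+1)) * (2:ℝ)^(2*lam:ℝ)) = 1 := by
    have hcomb : ∀ a b : ℝ, (2:ℝ)^a * (2:ℝ)^b = 2^(a+b) :=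
      fun a b => (Real.rpow_add two_pos a b).symm
    rw [← Real.rpow_natCast 2 l, ← Real.rpow_natCast 2 (l+1), hcomb, hcomb, hcomb,
      show (((l:ℕ):ℝ) + ((l+1:ℕ):ℝ) + ((1:ℝ)-2*(lam+(l:ℝ)+1) + 2*lam)) = 0 by push_cast; ring,
      Real.rpow_zero]
  have hG0 : Real.Gamma lam ≠ 0 := (Real.Gamma_pos_of_pos hlam).ne'
  have hGl : Real.Gamma (lam + (l:ℝ)) ≠ 0 := (Real.Gamma_pos_of_pos hl0).ne'
  have hG2 : Real.Gamma (2*(lam+(l:ℝ)+1)) ≠ 0 := (Real.Gamma_pos_of_pos (by linarith)).ne'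
  have hF : ((l.factorial : ℕ):ℝ) ≠ 0 := Nat.cast_ne_zero.2 l.factorial_ne_zero
  have hA : (2:ℝ)^(2*lam:ℝ) ≠ 0 := (Real.rpow_pos_of_pos two_pos _).ne'
  have hll : ((l:ℝ) + lam) ≠ 0 := by positivity
  have hll1 : ((l:ℝ) + lam + 1) ≠ 0 := by positivity
  have hpi : √π * √π = π := Real.mul_self_sqrt Real.pi_pos.le
  set G12 := Real.Gamma (lam + (l:ℝ) + 1 + 1/2) with hG12def
  field_simp
  rw [show lam * 2 = 2 * lam by ring]
  linear_combination
    (2^l * 2^(l+1) * (2:ℝ)^(2*lam:ℝ) * √π * ((l:ℝ)+lam+1)) * hdup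
    + (((l:ℝ)+lam+1) * Real.Gamma (2*(lam+(l:ℝ)+1)) * √π * √π) * hpow
    + (((l:ℝ)+lam+1) * Real.Gamma (2*(lam+(l:ℝ)+1))) * hpi
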